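/- Let ℓ be any element of the extended tensor algebra over ℝ^d, i a letter, and b = Σ_{j=1}^d b^j e_j a linear combination of single letters. Then ℓ⊗e_i⊗exp^{⧢}(b) = exp^{⧢}(b) ⧢ ((exp^{⧢}(-b) ⧢ ℓ)⊗e_i). -/

import Mathlib

open scoped BigOperators

/-- Words over the alphabet `Fin d`. -/
abbrev Word (d : ℕ) := List (Fin d)

/-- The extended tensor algebra over `ℝ^d`, viewed as coefficient functions on words. -/
abbrev ETA (d : ℕ) := Word d → ℝ

namespace ETA

variable {d : ℕ}

/-- The unit (empty word) element `∅`. -/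
noncomputable def unit (d : ℕ) : ETA d := fun v => if v = [] then 1 else 0

/-- Concatenation (tensor) product. -/
noncomputable def concat (p q : ETA d) : ETA d :=
  fun v => ∑ k ∈ Finset.range (v.length + 1), p (v.take k) * q (v.drop k)

/-- Concatenation powers. -/
noncomputable def cpow (p : ETA d) : ℕ → ETA d
  | 0 => unit d
  | n + 1 => concat (cpow p n) p

/-- Shuffle product of two words as a multiset of words. -/
def shuffleW {A : Type*} : List A → List A → Multiset (List A)
  | [], w => {w}
  | u, [] => {u}
  | a :: u, b :: w =>
      (shuffleW u (b :: w)).map (a :: ·) + (shuffleW (a :: u) w).map (b :: ·)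
  termination_by u w => u.length + w.length
  decreasing_by all_goals (simp only [List.length_cons]; omega)

/-- The finset of all words of length `n` over `Fin d`. -/
noncomputable def wordsLen (d n : ℕ) : Finset (Word d) :=
  Finset.image (fun f : Fin n → Fin d => List.ofFn f) Finset.univ

/-- Shuffle product on the extended tensor algebra (coefficient-wise finite sums). -/
noncomputable def shuffle (p q : ETA d) : ETA d :=
  fun v => ∑ k ∈ Finset.range (v.length + 1),
    ∑ u ∈ wordsLen d k, ∑ w ∈ wordsLen d (v.length - k),
      p u * q w * ((shuffleW u w).count v : ℝ)

/-- Shuffle powers. -/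
noncomputable def spow (p : ETA d) : ℕ → ETA d
  | 0 => unit d
  | n + 1 => shuffle (spow p n) p

/-- A linear combination of single letters `Σ_i c i • e_i`. -/
def letters (c : Fin d → ℝ) : ETA d := fun v =>
  match v with
  | [i] => c i
  | _ => 0

/-- A single letter `e_i`. -/
noncomputable def letter (i : Fin d) : ETA d := fun v => if v = [i] then 1 else 0

/-- The resolvent `(∅ - q)⁻¹ = Σ_n q^{⊗n}`, defined coefficient-wise. -/
noncomputable def res (q : ETA d) : ETA d := fun v => ∑' n, cpow q n v

/-- The shuffle exponential `exp^⧢(b) = Σ_n b^{⧢n}/n!`, defined coefficient-wise. -/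
noncomputable def shuexp (b : ETA d) : ETA d := fun v => ∑' n, spow b n v / (Nat.factorial n : ℝ)

/-- Right projection `ℓ|_i`, removing a terminal letter `i`. -/
def proj (p : ETA d) (i : Fin d) : ETA d := fun v => p (v ++ [i])

end ETA

namespace ETA

@[simp] lemma shuffleW_nil_left {A : Type*} (w : List A) : shuffleW [] w = {w} := by
  cases w <;> rw [shuffleW]

@[simp] lemma shuffleW_nil_right {A : Type*} (u : List A) : shuffleW u [] = {u} := by
  cases u
  · rw [shuffleW]
  · rw [shuffleW]; simp

lemma shuffleW_cons_cons {A : Type*} (a b : A) (u w : List A) :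
    shuffleW (a :: u) (b :: w) =
      (shuffleW u (b :: w)).map (a :: ·) + (shuffleW (a :: u) w).map (b :: ·) := by
  rw [shuffleW]

/-- End-append (snoc) recursion for word shuffles. -/
lemma shuffleW_snoc {A : Type*} : ∀ (u w : List A) (a b : A),
    shuffleW (u ++ [a]) (w ++ [b]) =
      ((shuffleW u (w ++ [b])).map (· ++ [a])) + ((shuffleW (u ++ [a]) w).map (· ++ [b]))
  | [], [], a, b => by
      simp [shuffleW_cons_cons]
      exact Multiset.cons_swap _ _ _
  | [], c :: w, a, b => by
      have ih := shuffleW_snoc [] w a b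
      simp only [List.nil_append] at ih
      simp only [List.nil_append, List.cons_append, shuffleW_cons_cons, ih,
        shuffleW_nil_left, Multiset.map_map, Multiset.map_add, Multiset.map_singleton,
        Function.comp, List.append_assoc, List.singleton_append]
      abel
  | c :: u, [], a, b => by
      have ih := shuffleW_snoc u [] a b
      simp only [List.nil_append] at ih
      simp only [List.nil_append, List.cons_append, shuffleW_cons_cons, ih,
        shuffleW_nil_right, shuffleW_nil_left, Multiset.map_map, Multiset.map_add,
        Multiset.map_singleton, Function.comp, List.append_assoc, List.singleton_append]
      abel
  | c :: u, e :: w, a, b => by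
      have ih1 := shuffleW_snoc u (e :: w) a b
      have ih2 := shuffleW_snoc (c :: u) w a b
      simp only [List.cons_append] at ih1 ih2
      simp only [List.cons_append, shuffleW_cons_cons, ih1, ih2, Multiset.map_map,
        Multiset.map_add, Function.comp, List.append_assoc, List.singleton_append]
      abel
  termination_by u w => u.length + w.length
  decreasing_by all_goals (simp only [List.length_cons, List.length_nil]; omega)

end ETA
namespace ETA
variable {d : ℕ}

lemma mem_wordsLen {u : Word d} {n : ℕ} : u ∈ wordsLen d n ↔ u.length = n := by
  unfold wordsLen
  simp only [Finset.mem_image, Finset.mem_univ, true_and]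
  constructor
  · rintro ⟨f, rfl⟩; simp
  · intro h; subst h; exact ⟨u.get, List.ofFn_get u⟩

lemma wordsLen_zero : wordsLen d 0 = {([] : Word d)} := by
  ext u; simp [mem_wordsLen, List.length_eq_zero_iff]

lemma wordsLen_succ (n : ℕ) : wordsLen d (n+1) =
    ((wordsLen d n) ×ˢ (Finset.univ : Finset (Fin d))).image (fun p => p.1 ++ [p.2]) := by
  ext u
  simp only [mem_wordsLen, Finset.mem_image, Finset.mem_product, Finset.mem_univ, and_true]
  constructor
  · intro h
    have hne : u ≠ [] := by intro e; rw [e] at h; simp at h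
    obtain ⟨L, a, rfl⟩ := (List.eq_nil_or_concat u).resolve_left hne
    exact ⟨(L, a), by simpa [List.concat_eq_append] using h, by simp [List.concat_eq_append]⟩
  · rintro ⟨⟨L, a⟩, hL, rfl⟩; simpa using hL

lemma sum_wordsLen_snoc (n : ℕ) (f : Word d → ℝ) :
    ∑ u ∈ wordsLen d (n+1), f u = ∑ a : Fin d, ∑ u ∈ wordsLen d n, f (u ++ [a]) := by
  rw [wordsLen_succ, Finset.sum_image, Finset.sum_product, Finset.sum_comm]
  rintro ⟨L, a⟩ - ⟨M, c⟩ - h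
  obtain ⟨h1, h2⟩ := List.append_inj' h rfl
  simp only [List.cons.injEq] at h2
  exact Prod.ext h1 h2.1

lemma count_map_snoc {A : Type*} [DecidableEq A] (S : Multiset (List A)) (a j : A) (v : List A) :
    ((S.map (· ++ [a])).count (v ++ [j])) = if a = j then S.count v else 0 := by
  split
  · next h =>
      subst h
      exact Multiset.count_map_eq_count' _ _ (fun x y hxy => by
        simpa using (List.append_inj' hxy rfl).1) v
  · next h =>
      rw [Multiset.count_eq_zero]
      intro hm
      obtain ⟨x, -, hx⟩ := Multiset.mem_map.mp hm
      exact h (by simpa using (List.append_inj' hx rfl).2)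

lemma count_shuffleW_snoc {A : Type*} [DecidableEq A] (u w v : List A) (j : A)
    (h : u ≠ [] ∨ w ≠ []) :
    ((shuffleW u w).count (v ++ [j]))
      = (if hu : u = [] then 0 else
          if u.getLast hu = j then (shuffleW u.dropLast w).count v else 0)
      + (if hw : w = [] then 0 else
          if w.getLast hw = j then (shuffleW u w.dropLast).count v else 0) := by
  rcases List.eq_nil_or_concat u with rfl | ⟨u', a, rfl⟩ <;>
    rcases List.eq_nil_or_concat w with rfl | ⟨w', b, rfl⟩ <;>
    simp only [List.concat_eq_append]
  · simp at h
  · rw [dif_pos trivial, dif_neg (show w' ++ [b] ≠ [] by simp)]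
    simp only [shuffleW_nil_left, List.getLast_concat, List.dropLast_concat, zero_add]
    rw [show ({w' ++ [b]} : Multiset (List A)) = ({w'} : Multiset (List A)).map (· ++ [b]) by simp]
    exact count_map_snoc _ _ _ _
  · rw [dif_pos trivial, dif_neg (show u' ++ [a] ≠ [] by simp)]
    simp only [shuffleW_nil_right, List.getLast_concat, List.dropLast_concat, add_zero]
    rw [show ({u' ++ [a]} : Multiset (List A)) = ({u'} : Multiset (List A)).map (· ++ [a]) by simp]
    exact count_map_snoc _ _ _ _
  · rw [dif_neg (show u' ++ [a] ≠ [] by simp), dif_neg (show w' ++ [b] ≠ [] by simp),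
      shuffleW_snoc, Multiset.count_add, count_map_snoc, count_map_snoc]
    simp [List.getLast_concat, List.dropLast_concat]

end ETA
namespace ETA
variable {d : ℕ}

lemma shuffle_nil (p q : ETA d) : shuffle p q [] = p [] * q [] := by
  unfold shuffle
  simp [wordsLen_zero]

set_option maxHeartbeats 1000000 in
lemma shuffle_snoc (p q : ETA d) (v : Word d) (j : Fin d) :
    shuffle p q (v ++ [j]) = shuffle (proj p j) q v + shuffle p (proj q j) v := by
  classical
  unfold shuffle proj
  simp only [List.length_append, List.length_cons, List.length_nil, Nat.zero_add]
  have step1 : ∀ k ∈ Finset.range (v.length + 1 + 1),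
      (∑ u ∈ wordsLen d k, ∑ w ∈ wordsLen d (v.length + 1 - k),
        p u * q w * ((shuffleW u w).count (v ++ [j]) : ℝ))
      = (∑ u ∈ wordsLen d k, ∑ w ∈ wordsLen d (v.length + 1 - k),
          p u * q w * (if hu : u = [] then 0 else
            if u.getLast hu = j then ((shuffleW u.dropLast w).count v : ℝ) else 0))
      + (∑ u ∈ wordsLen d k, ∑ w ∈ wordsLen d (v.length + 1 - k),
          p u * q w * (if hw : w = [] then 0 else
            if w.getLast hw = j then ((shuffleW u w.dropLast).count v : ℝ) else 0)) := by
    intro k hk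
    rw [← Finset.sum_add_distrib]
    refine Finset.sum_congr rfl fun u hu => ?_
    rw [← Finset.sum_add_distrib]
    refine Finset.sum_congr rfl fun w hw => ?_
    rw [← mul_add]
    congr 1
    have hne : u ≠ [] ∨ w ≠ [] := by
      by_contra hc
      push_neg at hc
      have h1 := mem_wordsLen.mp hu
      have h2 := mem_wordsLen.mp hw
      rw [hc.1] at h1; rw [hc.2] at h2
      simp only [List.length_nil] at h1 h2
      omega
    rw [count_shuffleW_snoc u w v j hne, Nat.cast_add,
      apply_dite (fun x : ℕ => (x:ℝ)), apply_dite (fun x : ℕ => (x:ℝ))]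
    simp only [apply_ite (fun x : ℕ => (x:ℝ)), Nat.cast_zero]
  rw [Finset.sum_congr rfl step1, Finset.sum_add_distrib]
  congr 1
  · rw [Finset.sum_range_succ']
    have h0 : (∑ u ∈ wordsLen d 0, ∑ w ∈ wordsLen d (v.length + 1 - 0),
        p u * q w * (if hu : u = [] then 0 else
          if u.getLast hu = j then ((shuffleW u.dropLast w).count v : ℝ) else 0)) = 0 := by
      simp [wordsLen_zero]
    rw [h0, add_zero]
    refine Finset.sum_congr rfl fun k hk => ?_
    have harith : v.length + 1 - (k+1) = v.length - k := by omega
    rw [harith, sum_wordsLen_snoc, Finset.sum_comm]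
    refine Finset.sum_congr rfl fun u hu => ?_
    rw [Finset.sum_comm]
    refine Finset.sum_congr rfl fun w hw => ?_
    have hval : ∀ a : Fin d,
        (if hu : u ++ [a] = [] then (0:ℝ) else
          if (u ++ [a]).getLast hu = j then ((shuffleW (u ++ [a]).dropLast w).count v : ℝ) else 0)
        = if a = j then ((shuffleW u w).count v : ℝ) else 0 := by
      intro a
      rw [dif_neg (by simp : u ++ [a] ≠ [])]
      simp [List.getLast_concat, List.dropLast_concat]
    simp only [hval, mul_ite, mul_zero]
    rw [Finset.sum_ite_eq' Finset.univ j]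
    simp
  · rw [Finset.sum_range_succ]
    have h0 : (∑ u ∈ wordsLen d (v.length + 1), ∑ w ∈ wordsLen d (v.length + 1 - (v.length + 1)),
        p u * q w * (if hw : w = [] then 0 else
          if w.getLast hw = j then ((shuffleW u w.dropLast).count v : ℝ) else 0)) = 0 := by
      simp [wordsLen_zero]
    rw [h0, add_zero]
    refine Finset.sum_congr rfl fun k hk => ?_
    have hk' : k ≤ v.length := by
      simp only [Finset.mem_range] at hk; omega
    have harith : v.length + 1 - k = (v.length - k) + 1 := by omega
    rw [harith]
    refine Finset.sum_congr rfl fun u hu => ?_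
    rw [sum_wordsLen_snoc, Finset.sum_comm]
    refine Finset.sum_congr rfl fun w hw => ?_
    have hval : ∀ b : Fin d,
        (if hw : w ++ [b] = [] then (0:ℝ) else
          if (w ++ [b]).getLast hw = j then ((shuffleW u (w ++ [b]).dropLast).count v : ℝ) else 0)
        = if b = j then ((shuffleW u w).count v : ℝ) else 0 := by
      intro b
      rw [dif_neg (by simp : w ++ [b] ≠ [])]
      simp [List.getLast_concat, List.dropLast_concat]
    simp only [hval, mul_ite, mul_zero]
    rw [Finset.sum_ite_eq' Finset.univ j]
    simp

end ETA
namespace ETA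
variable {d : ℕ}

@[simp] lemma letters_nil (c : Fin d → ℝ) : letters c [] = 0 := rfl
@[simp] lemma letters_single (c : Fin d → ℝ) (a : Fin d) : letters c [a] = c a := rfl
@[simp] lemma letters_cons_cons (c : Fin d → ℝ) (a x : Fin d) (t : Word d) :
    letters c (a :: x :: t) = 0 := rfl

@[simp] lemma letter_nil (i : Fin d) : letter i [] = 0 := by simp [letter]

lemma shuffle_smul_left (r : ℝ) (p q : ETA d) (v : Word d) :
    shuffle (fun w => r * p w) q v = r * shuffle p q v := by
  unfold shuffle
  simp only [Finset.mul_sum]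
  exact Finset.sum_congr rfl fun k _ => Finset.sum_congr rfl fun u _ =>
    Finset.sum_congr rfl fun w _ => by ring

lemma shuffle_smul_right (r : ℝ) (p q : ETA d) (v : Word d) :
    shuffle p (fun w => r * q w) v = r * shuffle p q v := by
  unfold shuffle
  simp only [Finset.mul_sum]
  exact Finset.sum_congr rfl fun k _ => Finset.sum_congr rfl fun u _ =>
    Finset.sum_congr rfl fun w _ => by ring

lemma shuffle_add_right (p q₁ q₂ : ETA d) (v : Word d) :
    shuffle p (fun w => q₁ w + q₂ w) v = shuffle p q₁ v + shuffle p q₂ v := by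
  unfold shuffle
  rw [← Finset.sum_add_distrib]
  refine Finset.sum_congr rfl fun k _ => ?_
  rw [← Finset.sum_add_distrib]
  refine Finset.sum_congr rfl fun u _ => ?_
  rw [← Finset.sum_add_distrib]
  exact Finset.sum_congr rfl fun w _ => by ring

lemma shuffle_zero_left (q : ETA d) (v : Word d) :
    shuffle (fun _ => (0:ℝ)) q v = 0 := by
  unfold shuffle; simp

lemma shuffle_zero_right (p : ETA d) (v : Word d) :
    shuffle p (fun _ => (0:ℝ)) v = 0 := by
  unfold shuffle; simp

/-- Shuffling with a multiple of the unit. -/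
lemma shuffle_unit_right (p : ETA d) (r : ℝ) (v : Word d) :
    shuffle p (fun w => if w = [] then r else 0) v = p v * r := by
  unfold shuffle
  beta_reduce
  rw [Finset.sum_eq_single_of_mem v.length (by simp)]
  · rw [Nat.sub_self, wordsLen_zero]
    simp only [Finset.sum_singleton, shuffleW_nil_right, Multiset.count_singleton,
      if_true, Nat.cast_ite, Nat.cast_one, Nat.cast_zero, mul_ite, mul_one, mul_zero]
    rw [Finset.sum_ite_eq, if_pos (mem_wordsLen.mpr rfl)]
  · intro k hk hkne
    apply Finset.sum_eq_zero; intro u hu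
    apply Finset.sum_eq_zero; intro w hw
    have hwlen := mem_wordsLen.mp hw
    have hkr := Finset.mem_range.mp hk
    have : w ≠ [] := by
      intro e; rw [e] at hwlen; simp only [List.length_nil] at hwlen; omega
    rw [if_neg this]
    ring

lemma proj_letters (c : Fin d → ℝ) (j : Fin d) :
    proj (letters c) j = fun w => if w = [] then c j else 0 := by
  funext w
  rcases w with _ | ⟨a, _ | ⟨x, t⟩⟩ <;> simp [proj, letters]

lemma neg_letters (b : Fin d → ℝ) : -(letters b) = letters (fun i => -(b i)) := by
  funext w
  rcases w with _ | ⟨a, _ | ⟨x, t⟩⟩ <;> simp [letters]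

lemma spow_letters_nil (c : Fin d → ℝ) : ∀ n, spow (letters c) n [] = if n = 0 then 1 else 0
  | 0 => by simp [spow, unit]
  | n + 1 => by
      show shuffle (spow (letters c) n) (letters c) [] = _
      rw [shuffle_nil]
      simp

lemma spow_letters_snoc (c : Fin d → ℝ) :
    ∀ n (w : Word d) (j : Fin d),
      spow (letters c) (n+1) (w ++ [j]) = (n+1 : ℝ) * (c j * spow (letters c) n w)
  | 0, w, j => by
      show shuffle (unit d) (letters c) (w ++ [j]) = _
      rw [shuffle_snoc]
      have h1 : proj (unit d) j = fun _ => (0:ℝ) := by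
        funext u; simp [proj, unit]
      rw [h1, shuffle_zero_left, proj_letters, shuffle_unit_right]
      show (0:ℝ) + unit d w * c j = (((0:ℕ):ℝ) + 1) * (c j * unit d w)
      push_cast
      ring
  | n + 1, w, j => by
      show shuffle (spow (letters c) (n+1)) (letters c) (w ++ [j]) = _
      rw [shuffle_snoc]
      have h1 : proj (spow (letters c) (n+1)) j
          = fun u => ((n:ℝ)+1) * c j * spow (letters c) n u := by
        funext u
        show spow (letters c) (n+1) (u ++ [j]) = _
        rw [spow_letters_snoc c n u j]; ring
      have h2 : shuffle (fun u => ((n:ℝ)+1) * c j * spow (letters c) n u) (letters c) w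
          = ((n:ℝ)+1) * c j * shuffle (spow (letters c) n) (letters c) w := by
        exact shuffle_smul_left _ _ _ _
      rw [h1, h2, proj_letters, shuffle_unit_right]
      show ((n:ℝ)+1) * c j * spow (letters c) (n+1) w + spow (letters c) (n+1) w * c j = _
      push_cast
      ring

lemma spow_letters_length (c : Fin d → ℝ) :
    ∀ n (v : Word d), v.length ≠ n → spow (letters c) n v = 0 := by
  intro n
  induction n with
  | zero => intro v hv; show unit d v = 0
            simp only [unit, ite_eq_right_iff]
            intro h; exact absurd (by simp [h]) hv
  | succ n ih =>
      intro v hv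
      rcases List.eq_nil_or_concat v with rfl | ⟨w, j, rfl⟩
      · rw [spow_letters_nil]; simp
      · rw [List.concat_eq_append, spow_letters_snoc]
        rw [ih w (by intro h; apply hv; simp [h])]
        ring

lemma shuexp_letters_nil (c : Fin d → ℝ) : shuexp (letters c) [] = 1 := by
  unfold shuexp
  rw [tsum_eq_single 0 (fun n hn => by rw [spow_letters_nil, if_neg hn]; simp)]
  simp [spow_letters_nil]

lemma shuexp_letters_snoc (c : Fin d → ℝ) (w : Word d) (j : Fin d) :
    shuexp (letters c) (w ++ [j]) = c j * shuexp (letters c) w := by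
  unfold shuexp
  rw [tsum_eq_single (w.length + 1) (fun n hn => by
        rw [spow_letters_length c n _ (by simpa using hn.symm)]; simp),
      tsum_eq_single w.length (fun n hn => by
        rw [spow_letters_length c n _ hn.symm]; simp),
      spow_letters_snoc]
  rw [Nat.factorial_succ]
  have h1 : ((w.length + 1 : ℕ) : ℝ) ≠ 0 := by positivity
  have h2 : ((w.length.factorial : ℕ) : ℝ) ≠ 0 := by
    exact_mod_cast Nat.factorial_ne_zero w.length
  push_cast
  field_simp

lemma proj_shuexp_letters (c : Fin d → ℝ) (j : Fin d) :
    proj (shuexp (letters c)) j = fun w => c j * shuexp (letters c) w := by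
  funext w; exact shuexp_letters_snoc c w j

end ETA
namespace ETA
variable {d : ℕ}

lemma concat_nil (p q : ETA d) : concat p q [] = p [] * q [] := by
  unfold concat; simp

lemma concat_snoc (p q : ETA d) (v : Word d) (j : Fin d) :
    concat p q (v ++ [j]) = concat p (proj q j) v + p (v ++ [j]) * q [] := by
  unfold concat proj
  simp only [List.length_append, List.length_cons, List.length_nil, Nat.zero_add]
  rw [Finset.sum_range_succ]
  congr 1
  · refine Finset.sum_congr rfl fun k hk => ?_
    have hk' : k ≤ v.length := by
      simp only [Finset.mem_range] at hk; omega
    rw [List.take_append_of_le_length hk', List.drop_append_of_le_length hk']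
  · have hlen : v.length + 1 = (v ++ [j]).length := by simp
    rw [hlen, List.take_length, List.drop_length]

lemma concat_mul_right (p q : ETA d) (r : ℝ) (v : Word d) :
    concat p (fun w => r * q w) v = r * concat p q v := by
  unfold concat
  simp only [Finset.mul_sum]
  exact Finset.sum_congr rfl fun k _ => by ring

lemma concat_unit_right (p : ETA d) (r : ℝ) (v : Word d) :
    concat p (fun w => if w = [] then r else 0) v = p v * r := by
  unfold concat
  beta_reduce
  rw [Finset.sum_eq_single_of_mem v.length (by simp)]
  · rw [List.take_length, List.drop_length, if_pos rfl]
  · intro k hk hkne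
    have hk' : k < v.length := by
      simp only [Finset.mem_range] at hk; omega
    have : List.drop k v ≠ [] := by
      simp only [ne_eq, List.drop_eq_nil_iff, not_le]
      omega
    rw [if_neg this, mul_zero]

lemma concat_letter_snoc (p : ETA d) (i : Fin d) (v : Word d) (j : Fin d) :
    concat p (letter i) (v ++ [j]) = if j = i then p v else 0 := by
  rw [concat_snoc, letter_nil, mul_zero, add_zero]
  have h : proj (letter i) j
      = fun w => if w = [] then (if j = i then (1:ℝ) else 0) else 0 := by
    funext w
    rcases w with _ | ⟨a, t⟩
    · by_cases hji : j = i <;> simp [proj, letter, hji]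
    · simp [proj, letter]
  rw [h, concat_unit_right]
  by_cases hji : j = i <;> simp [hji]

lemma shuffle_exp_cancel (b : Fin d → ℝ) (v : Word d) : ∀ ℓ : ETA d,
    shuffle (shuexp (letters b))
      (shuffle (shuexp (letters (fun i => -(b i)))) ℓ) v = ℓ v := by
  induction v using List.reverseRecOn with
  | nil =>
      intro ℓ
      rw [shuffle_nil, shuffle_nil, shuexp_letters_nil, shuexp_letters_nil]; ring
  | append_singleton v j ih =>
      intro ℓ
      rw [shuffle_snoc]
      have h2 : proj (shuffle (shuexp (letters fun i => -(b i))) ℓ) j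
          = fun w => (-(b j)) * shuffle (shuexp (letters fun i => -(b i))) ℓ w
              + shuffle (shuexp (letters fun i => -(b i))) (proj ℓ j) w := by
        funext w
        show shuffle _ ℓ (w ++ [j]) = _
        rw [shuffle_snoc, proj_shuexp_letters]
        rw [shuffle_smul_left]
      rw [proj_shuexp_letters, shuffle_smul_left, h2, shuffle_add_right,
        shuffle_smul_right, ih (proj ℓ j)]
      simp only [proj]
      ring
end ETA


set_option maxHeartbeats 1000000 in
/-- For any `ℓ` in the extended tensor algebra, a letter `i` and a
linear combination of single letters `b`:
`ℓ ⊗ e_i ⊗ exp^⧢(b) = exp^⧢(b) ⧢ ((exp^⧢(-b) ⧢ ℓ) ⊗ e_i)`. -/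
theorem exponential_shuffle_identity (d : ℕ) (ℓ : ETA d) (i : Fin d) (b : Fin d → ℝ) :
    ETA.concat (ETA.concat ℓ (ETA.letter i)) (ETA.shuexp (ETA.letters b))
      = ETA.shuffle (ETA.shuexp (ETA.letters b))
          (ETA.concat (ETA.shuffle (ETA.shuexp (-(ETA.letters b))) ℓ) (ETA.letter i)) := by
  rw [ETA.neg_letters]
  funext v
  induction v using List.reverseRecOn with
  | nil =>
      simp [ETA.concat_nil, ETA.shuffle_nil]
  | append_singleton v j ih =>
      rw [ETA.concat_snoc, ETA.proj_shuexp_letters, ETA.concat_mul_right,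
        ETA.concat_letter_snoc, ETA.shuexp_letters_nil]
      rw [ETA.shuffle_snoc, ETA.proj_shuexp_letters, ETA.shuffle_smul_left]
      have hQ : ETA.proj (ETA.concat
            (ETA.shuffle (ETA.shuexp (ETA.letters fun i' => -(b i'))) ℓ) (ETA.letter i)) j
          = fun w => if j = i
              then ETA.shuffle (ETA.shuexp (ETA.letters fun i' => -(b i'))) ℓ w else 0 := by
        funext w
        show ETA.concat _ (ETA.letter i) (w ++ [j]) = _
        rw [ETA.concat_letter_snoc]
      rw [hQ]
      by_cases hji : j = i
      · simp only [hji, if_true]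
        rw [ETA.shuffle_exp_cancel b v ℓ, ih, mul_one]
      · simp only [if_neg hji]
        rw [ETA.shuffle_zero_right, ih]
        ring
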